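/- arXiv:1302.0951 — 7 statements merged into one kernel-verified Lean document; each statement's English description precedes it below -/
import Mathlib

section
/- Let U be a finite set, A a finite set of functions from U to a finite set, p a probability distribution on A, and α, β ≥ 0. Suppose that for every u ∈ U, the sum over all u' ≠ u with p({A : A u = A u'}) > α/|ImA| of p({A : A u = A u'}) is at most β, where ImA = ⋃_{A∈A} {A u : u ∈ U}. Then for any subsets T, T' of U, ∑_{u∈T} ∑_{u'∈T'} p({A : A u = A u'}) ≤ |T ∩ T'| + |T||T'|·α/|ImA| + min(|T|,|T'|)·β. -/
open Finset
open scoped Classical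

/-- Strong hash condition (H3) implies the weak hash condition (H3'). -/
theorem stmt0 {U V : Type*} [Fintype U] [DecidableEq U] [Fintype V] [DecidableEq V]
    (𝒜 : Finset (U → V)) (p : (U → V) → ℝ)
    (hp0 : ∀ A, 0 ≤ p A) (hp1 : ∑ A ∈ 𝒜, p A = 1)
    (α β : ℝ) (hα : 0 ≤ α) (hβ : 0 ≤ β)
    (Im𝒜 : Finset V) (hIm : Im𝒜 = 𝒜.biUnion fun A => Finset.image A Finset.univ)
    (hhash : ∀ u : U,
      ∑ u' ∈ (Finset.univ.erase u).filter
          (fun u' => α / (Im𝒜.card : ℝ) < ∑ A ∈ 𝒜.filter (fun A => A u = A u'), p A),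
        ∑ A ∈ 𝒜.filter (fun A => A u = A u'), p A ≤ β) :
    ∀ T T' : Finset U,
      ∑ u ∈ T, ∑ u' ∈ T', ∑ A ∈ 𝒜.filter (fun A => A u = A u'), p A ≤
        ((T ∩ T').card : ℝ) + (T.card : ℝ) * (T'.card : ℝ) * α / (Im𝒜.card : ℝ)
          + ((min T.card T'.card : ℕ) : ℝ) * β := by
  set c : ℝ := α / (Im𝒜.card : ℝ) with hcdef
  have hc : 0 ≤ c := div_nonneg hα (Nat.cast_nonneg _)
  have hq0 : ∀ u u' : U, 0 ≤ ∑ A ∈ 𝒜.filter (fun A => A u = A u'), p A :=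
    fun u u' => Finset.sum_nonneg fun A _ => hp0 A
  have hq1 : ∀ u u' : U, ∑ A ∈ 𝒜.filter (fun A => A u = A u'), p A ≤ 1 := by
    intro u u'
    rw [← hp1]
    exact Finset.sum_le_sum_of_subset_of_nonneg (Finset.filter_subset _ _)
      (fun A _ _ => hp0 A)
  have key : ∀ T T' : Finset U,
      ∑ u ∈ T, ∑ u' ∈ T', ∑ A ∈ 𝒜.filter (fun A => A u = A u'), p A ≤
        ((T ∩ T').card : ℝ) + (T.card : ℝ) * (T'.card : ℝ) * α / (Im𝒜.card : ℝ)
          + (T.card : ℝ) * β := by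
    intro T T'
    have hrow : ∀ u ∈ T,
        ∑ u' ∈ T', ∑ A ∈ 𝒜.filter (fun A => A u = A u'), p A ≤
          (if u ∈ T' then (1:ℝ) else 0) + (T'.card : ℝ) * c + β := by
      intro u _
      have hsplit1 := Finset.sum_filter_add_sum_filter_not T' (fun u' => u' = u)
        (fun u' => ∑ A ∈ 𝒜.filter (fun A => A u = A u'), p A)
      have hsplit2 := Finset.sum_filter_add_sum_filter_not (T'.filter (fun u' => ¬ u' = u))
        (fun u' => c < ∑ A ∈ 𝒜.filter (fun A => A u = A u'), p A)
        (fun u' => ∑ A ∈ 𝒜.filter (fun A => A u = A u'), p A)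
      have h1 : ∑ u' ∈ T'.filter (fun u' => u' = u),
          ∑ A ∈ 𝒜.filter (fun A => A u = A u'), p A ≤ (if u ∈ T' then (1:ℝ) else 0) := by
        by_cases h : u ∈ T'
        · simp only [Finset.filter_eq', h, if_pos, Finset.sum_singleton]
          simpa using hq1 u u
        · simp [Finset.filter_eq', h]
      have h2a : ∑ u' ∈ (T'.filter (fun u' => ¬ u' = u)).filter
            (fun u' => c < ∑ A ∈ 𝒜.filter (fun A => A u = A u'), p A),
          ∑ A ∈ 𝒜.filter (fun A => A u = A u'), p A ≤ β := by
        refine le_trans (Finset.sum_le_sum_of_subset_of_nonneg ?_ (fun i _ _ => hq0 u i))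
          (hhash u)
        intro x hx
        simp only [Finset.mem_filter, Finset.mem_erase, Finset.mem_univ, and_true] at hx ⊢
        exact ⟨hx.1.2, hx.2⟩
      have h2b : ∑ u' ∈ (T'.filter (fun u' => ¬ u' = u)).filter
            (fun u' => ¬ c < ∑ A ∈ 𝒜.filter (fun A => A u = A u'), p A),
          ∑ A ∈ 𝒜.filter (fun A => A u = A u'), p A ≤ (T'.card : ℝ) * c := by
        calc _ ≤ ∑ _u' ∈ (T'.filter (fun u' => ¬ u' = u)).filter
              (fun u' => ¬ c < ∑ A ∈ 𝒜.filter (fun A => A u = A u'), p A), c :=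
                Finset.sum_le_sum fun i hi => not_lt.mp (Finset.mem_filter.mp hi).2
          _ = (((T'.filter (fun u' => ¬ u' = u)).filter
              (fun u' => ¬ c < ∑ A ∈ 𝒜.filter (fun A => A u = A u'), p A)).card : ℝ) * c := by
                rw [Finset.sum_const, nsmul_eq_mul]
          _ ≤ (T'.card : ℝ) * c := by
                refine mul_le_mul_of_nonneg_right ?_ hc
                exact_mod_cast Finset.card_le_card
                  ((Finset.filter_subset _ _).trans (Finset.filter_subset _ _))
      linarith
    calc ∑ u ∈ T, ∑ u' ∈ T', ∑ A ∈ 𝒜.filter (fun A => A u = A u'), p A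
        ≤ ∑ u ∈ T, ((if u ∈ T' then (1:ℝ) else 0) + (T'.card : ℝ) * c + β) :=
          Finset.sum_le_sum hrow
      _ = ((T ∩ T').card : ℝ) + (T.card : ℝ) * ((T'.card : ℝ) * c) + (T.card : ℝ) * β := by
          rw [Finset.sum_add_distrib, Finset.sum_add_distrib, Finset.sum_const,
            Finset.sum_const, nsmul_eq_mul, nsmul_eq_mul, ← Finset.sum_filter,
            Finset.sum_const, Finset.filter_mem_eq_inter, nsmul_eq_mul, mul_one]
      _ = ((T ∩ T').card : ℝ) + (T.card : ℝ) * (T'.card : ℝ) * α / (Im𝒜.card : ℝ)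
            + (T.card : ℝ) * β := by
          rw [hcdef]; ring
  intro T T'
  rcases le_total T.card T'.card with h | h
  · rw [min_eq_left h]
    exact key T T'
  · have hq : ∀ u u' : U, 𝒜.filter (fun A => A u = A u') = 𝒜.filter (fun A => A u' = A u) := by
      intro u u'
      ext A
      simp only [Finset.mem_filter]
      exact and_congr_right fun _ => eq_comm
    have hswap : ∑ u ∈ T, ∑ u' ∈ T', ∑ A ∈ 𝒜.filter (fun A => A u = A u'), p A
        = ∑ u ∈ T', ∑ u' ∈ T, ∑ A ∈ 𝒜.filter (fun A => A u = A u'), p A := by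
      rw [Finset.sum_comm]
      exact Finset.sum_congr rfl fun x _ => Finset.sum_congr rfl fun y _ => by rw [hq]
    rw [hswap, min_eq_right h, Finset.inter_comm]
    have := key T' T
    have hmul : (T'.card : ℝ) * (T.card : ℝ) * α / (Im𝒜.card : ℝ)
        = (T.card : ℝ) * (T'.card : ℝ) * α / (Im𝒜.card : ℝ) := by ring
    linarith [key T' T]
end

section
/- Let (A, p_A) and (B, p_B) be two ensembles of functions on a common finite domain U, satisfying the strong hash condition with parameters (α_A, β_A) and (α_B, β_B) respectively: for every u, ∑_{u'≠u : p_A({A : Au=Au'}) > α_A/|ImA|} p_A({A : Au=Au'}) ≤ β_A, and similarly for B. Define the product ensemble of functions (A,B) mapping u to (Au, Bu), with the product distribution p_{AB}(A,B) = p_A(A)p_B(B). Then the product ensemble satisfies the strong hash condition with parameters α_{AB} = α_A·α_B and β_{AB} = β_A + β_B, with respect to its image set Im(A×B) ⊆ ImA × ImB. -/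
open Finset
open scoped Classical

/-- The product of two ensembles satisfying the strong hash condition satisfies the
strong hash condition with parameters `(αA * αB, βA + βB)`. -/
theorem stmt1 {U V W : Type*} [Fintype U] [DecidableEq U] [Fintype V] [DecidableEq V]
    [Fintype W] [DecidableEq W]
    (𝒜 : Finset (U → V)) (ℬ : Finset (U → W))
    (pA : (U → V) → ℝ) (pB : (U → W) → ℝ)
    (hpA0 : ∀ A, 0 ≤ pA A) (hpA1 : ∑ A ∈ 𝒜, pA A = 1)
    (hpB0 : ∀ B, 0 ≤ pB B) (hpB1 : ∑ B ∈ ℬ, pB B = 1)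
    (Im𝒜 : Finset V) (hImA : Im𝒜 = 𝒜.biUnion fun A => Finset.image A Finset.univ)
    (Imℬ : Finset W) (hImB : Imℬ = ℬ.biUnion fun B => Finset.image B Finset.univ)
    (Im𝒜ℬ : Finset (V × W))
    (hImAB : Im𝒜ℬ = (𝒜 ×ˢ ℬ).biUnion fun AB =>
      Finset.image (fun u => (AB.1 u, AB.2 u)) Finset.univ)
    (αA βA αB βB : ℝ) (hαA : 0 ≤ αA) (hβA : 0 ≤ βA) (hαB : 0 ≤ αB) (hβB : 0 ≤ βB)
    (hhashA : ∀ u : U, ∑ u' ∈ (Finset.univ.erase u).filter (fun u' =>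
        αA / (Im𝒜.card : ℝ) < ∑ A ∈ 𝒜.filter (fun A => A u = A u'), pA A),
      ∑ A ∈ 𝒜.filter (fun A => A u = A u'), pA A ≤ βA)
    (hhashB : ∀ u : U, ∑ u' ∈ (Finset.univ.erase u).filter (fun u' =>
        αB / (Imℬ.card : ℝ) < ∑ B ∈ ℬ.filter (fun B => B u = B u'), pB B),
      ∑ B ∈ ℬ.filter (fun B => B u = B u'), pB B ≤ βB) :
    ∀ u : U, ∑ u' ∈ (Finset.univ.erase u).filter (fun u' =>
        αA * αB / (Im𝒜ℬ.card : ℝ) < ∑ AB ∈ (𝒜 ×ˢ ℬ).filter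
          (fun AB => AB.1 u = AB.1 u' ∧ AB.2 u = AB.2 u'), pA AB.1 * pB AB.2),
      ∑ AB ∈ (𝒜 ×ˢ ℬ).filter (fun AB => AB.1 u = AB.1 u' ∧ AB.2 u = AB.2 u'),
        pA AB.1 * pB AB.2 ≤ βA + βB := by

  intro u
  -- nonemptiness
  have hUne : Nonempty U := ⟨u⟩
  have h𝒜ne : 𝒜.Nonempty := by
    rcases Finset.eq_empty_or_nonempty 𝒜 with h | h
    · simp [h] at hpA1
    · exact h
  have hℬne : ℬ.Nonempty := by
    rcases Finset.eq_empty_or_nonempty ℬ with h | h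
    · simp [h] at hpB1
    · exact h
  -- factorization of the product collision probability
  have key : ∀ u' : U, (∑ AB ∈ (𝒜 ×ˢ ℬ).filter
        (fun AB => AB.1 u = AB.1 u' ∧ AB.2 u = AB.2 u'), pA AB.1 * pB AB.2)
      = (∑ A ∈ 𝒜.filter (fun A => A u = A u'), pA A) *
        (∑ B ∈ ℬ.filter (fun B => B u = B u'), pB B) := by
    intro u'
    rw [Finset.sum_mul_sum]
    rw [Finset.sum_filter, Finset.sum_product]
    simp only [Finset.sum_filter, Finset.mul_sum, Finset.sum_mul]
    refine Finset.sum_congr rfl fun A _ => ?_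
    by_cases h1 : A u = A u' <;> simp [h1]
  set qA : U → ℝ := fun u' => ∑ A ∈ 𝒜.filter (fun A => A u = A u'), pA A with hqA
  set qB : U → ℝ := fun u' => ∑ B ∈ ℬ.filter (fun B => B u = B u'), pB B with hqB
  have hqA0 : ∀ u', 0 ≤ qA u' := fun u' => Finset.sum_nonneg fun A _ => hpA0 A
  have hqB0 : ∀ u', 0 ≤ qB u' := fun u' => Finset.sum_nonneg fun B _ => hpB0 B
  have hqA1 : ∀ u', qA u' ≤ 1 := by
    intro u'
    rw [← hpA1]
    exact Finset.sum_le_sum_of_subset_of_nonneg (Finset.filter_subset _ _)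
      (fun A _ _ => hpA0 A)
  have hqB1 : ∀ u', qB u' ≤ 1 := by
    intro u'
    rw [← hpB1]
    exact Finset.sum_le_sum_of_subset_of_nonneg (Finset.filter_subset _ _)
      (fun B _ _ => hpB0 B)
  -- cardinalities
  have hImAne : Im𝒜.Nonempty := by
    obtain ⟨A, hA⟩ := h𝒜ne
    exact ⟨A u, by rw [hImA]; exact Finset.mem_biUnion.2 ⟨A, hA, Finset.mem_image_of_mem _ (Finset.mem_univ u)⟩⟩
  have hImBne : Imℬ.Nonempty := by
    obtain ⟨B, hB⟩ := hℬne
    exact ⟨B u, by rw [hImB]; exact Finset.mem_biUnion.2 ⟨B, hB, Finset.mem_image_of_mem _ (Finset.mem_univ u)⟩⟩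
  have hImABne : Im𝒜ℬ.Nonempty := by
    obtain ⟨A, hA⟩ := h𝒜ne
    obtain ⟨B, hB⟩ := hℬne
    refine ⟨(A u, B u), ?_⟩
    rw [hImAB]
    exact Finset.mem_biUnion.2 ⟨(A, B), Finset.mem_product.2 ⟨hA, hB⟩,
      Finset.mem_image_of_mem _ (Finset.mem_univ u)⟩
  have hsub : Im𝒜ℬ ⊆ Im𝒜 ×ˢ Imℬ := by
    intro x hx
    rw [hImAB] at hx
    obtain ⟨AB, hAB, hx⟩ := Finset.mem_biUnion.1 hx
    obtain ⟨u0, _, rfl⟩ := Finset.mem_image.1 hx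
    rw [Finset.mem_product] at hAB ⊢
    constructor
    · rw [hImA]
      exact Finset.mem_biUnion.2 ⟨AB.1, hAB.1, Finset.mem_image_of_mem _ (Finset.mem_univ u0)⟩
    · rw [hImB]
      exact Finset.mem_biUnion.2 ⟨AB.2, hAB.2, Finset.mem_image_of_mem _ (Finset.mem_univ u0)⟩
  have hcard : (Im𝒜ℬ.card : ℝ) ≤ (Im𝒜.card : ℝ) * (Imℬ.card : ℝ) := by
    have := Finset.card_le_card hsub
    rw [Finset.card_product] at this
    exact_mod_cast this
  have hcA : (0:ℝ) < (Im𝒜.card : ℝ) := by exact_mod_cast Finset.card_pos.2 hImAne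
  have hcB : (0:ℝ) < (Imℬ.card : ℝ) := by exact_mod_cast Finset.card_pos.2 hImBne
  have hcAB : (0:ℝ) < (Im𝒜ℬ.card : ℝ) := by exact_mod_cast Finset.card_pos.2 hImABne
  have hthresh : αA / (Im𝒜.card : ℝ) * (αB / (Imℬ.card : ℝ)) ≤ αA * αB / (Im𝒜ℬ.card : ℝ) := by
    rw [div_mul_div_comm]
    exact div_le_div_of_nonneg_left (mul_nonneg hαA hαB) hcAB hcard
  -- the filter sets
  set SAB := (Finset.univ.erase u).filter (fun u' =>
      αA * αB / (Im𝒜ℬ.card : ℝ) < ∑ AB ∈ (𝒜 ×ˢ ℬ).filter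
        (fun AB => AB.1 u = AB.1 u' ∧ AB.2 u = AB.2 u'), pA AB.1 * pB AB.2) with hSAB
  set SA := (Finset.univ.erase u).filter (fun u' => αA / (Im𝒜.card : ℝ) < qA u') with hSA
  set SB := (Finset.univ.erase u).filter (fun u' => αB / (Imℬ.card : ℝ) < qB u') with hSB
  have hsubS : SAB ⊆ SA ∪ SB := by
    intro u' hu'
    rw [hSAB, Finset.mem_filter] at hu'
    obtain ⟨hmem, hlt⟩ := hu'
    rw [key u'] at hlt
    by_contra hcon
    rw [Finset.mem_union, hSA, hSB, Finset.mem_filter, Finset.mem_filter] at hcon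
    push_neg at hcon
    obtain ⟨h1, h2⟩ := hcon
    have hA' := h1 hmem
    have hB' := h2 hmem
    have : qA u' * qB u' ≤ αA / (Im𝒜.card : ℝ) * (αB / (Imℬ.card : ℝ)) :=
      mul_le_mul hA' hB' (hqB0 u') (le_trans (hqA0 u') hA')
    linarith [lt_of_lt_of_le hlt (le_trans this hthresh)]
  have hq : ∀ u' : U, (∑ AB ∈ (𝒜 ×ˢ ℬ).filter
      (fun AB => AB.1 u = AB.1 u' ∧ AB.2 u = AB.2 u'), pA AB.1 * pB AB.2) = qA u' * qB u' :=
    key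
  calc ∑ u' ∈ SAB, (∑ AB ∈ (𝒜 ×ˢ ℬ).filter
        (fun AB => AB.1 u = AB.1 u' ∧ AB.2 u = AB.2 u'), pA AB.1 * pB AB.2)
      = ∑ u' ∈ SAB, qA u' * qB u' := by
        exact Finset.sum_congr rfl fun u' _ => hq u'
    _ ≤ ∑ u' ∈ SA ∪ SB, qA u' * qB u' :=
        Finset.sum_le_sum_of_subset_of_nonneg hsubS
          (fun u' _ _ => mul_nonneg (hqA0 u') (hqB0 u'))
    _ ≤ ∑ u' ∈ SA, qA u' * qB u' + ∑ u' ∈ SB, qA u' * qB u' := by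
        have h := Finset.sum_union_inter (s₁ := SA) (s₂ := SB)
          (f := fun u' => qA u' * qB u')
        have h0 : 0 ≤ ∑ u' ∈ SA ∩ SB, qA u' * qB u' :=
          Finset.sum_nonneg fun u' _ => mul_nonneg (hqA0 u') (hqB0 u')
        linarith
    _ ≤ βA + βB := by
        have h1 : ∑ u' ∈ SA, qA u' * qB u' ≤ βA := by
          calc ∑ u' ∈ SA, qA u' * qB u' ≤ ∑ u' ∈ SA, qA u' :=
                Finset.sum_le_sum fun u' _ =>
                  mul_le_of_le_one_right (hqA0 u') (hqB1 u')
            _ ≤ βA := hhashA u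
        have h2 : ∑ u' ∈ SB, qA u' * qB u' ≤ βB := by
          calc ∑ u' ∈ SB, qA u' * qB u' ≤ ∑ u' ∈ SB, qB u' :=
                Finset.sum_le_sum fun u' _ =>
                  mul_le_of_le_one_left (hqB0 u') (hqA1 u')
            _ ≤ βB := hhashB u
        linarith
end

section
/- Let U be a finite set and (A, p_A) an ensemble of functions from U into a finite set satisfying the weak hash inequality: for all T, T' ⊆ U, ∑_{u∈T, u'∈T'} p_A({A : Au = Au'}) ≤ |T∩T'| + |T||T'|·α/|ImA| + min(|T|,|T'|)·β. Then for every G ⊆ U and every u ∈ U, the probability p_A({A : (G \ {u}) ∩ C_A(Au) ≠ ∅}) is at most |G|·α/|ImA| + β, where C_A(c) = {u' : Au' = c}. -/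
open Finset
open scoped Classical

/-- Collision-resistance property derived from the weak hash inequality. -/
theorem stmt2 {U V : Type*} [Fintype U] [DecidableEq U] [Fintype V] [DecidableEq V]
    (𝒜 : Finset (U → V)) (p : (U → V) → ℝ)
    (hp0 : ∀ A, 0 ≤ p A) (hp1 : ∑ A ∈ 𝒜, p A = 1)
    (α β : ℝ) (hα : 0 ≤ α) (hβ : 0 ≤ β)
    (Im𝒜 : Finset V) (hIm : Im𝒜 = 𝒜.biUnion fun A => Finset.image A Finset.univ)
    (hweak : ∀ T T' : Finset U,
      ∑ u ∈ T, ∑ u' ∈ T', ∑ A ∈ 𝒜.filter (fun A => A u = A u'), p A ≤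
        ((T ∩ T').card : ℝ) + (T.card : ℝ) * (T'.card : ℝ) * α / (Im𝒜.card : ℝ)
          + ((min T.card T'.card : ℕ) : ℝ) * β) :
    ∀ (G : Finset U) (u : U),
      ∑ A ∈ 𝒜.filter (fun A => ∃ u' ∈ G.erase u, A u' = A u), p A ≤
        (G.card : ℝ) * α / (Im𝒜.card : ℝ) + β := by
  intro G u
  have h1 : ∑ A ∈ 𝒜.filter (fun A => ∃ u' ∈ G.erase u, A u' = A u), p A ≤
      ∑ u' ∈ G.erase u, ∑ A ∈ 𝒜.filter (fun A => A u' = A u), p A := by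
    calc ∑ A ∈ 𝒜.filter (fun A => ∃ u' ∈ G.erase u, A u' = A u), p A
        = ∑ A ∈ 𝒜, if (∃ u' ∈ G.erase u, A u' = A u) then p A else 0 :=
          Finset.sum_filter _ _
      _ ≤ ∑ A ∈ 𝒜, ∑ u' ∈ G.erase u, if A u' = A u then p A else 0 := by
          refine Finset.sum_le_sum fun A _ => ?_
          split_ifs with h
          · obtain ⟨u', hu', hau⟩ := h
            have := Finset.single_le_sum
              (f := fun u' => if A u' = A u then p A else 0)
              (fun i _ => by split_ifs; exacts [hp0 A, le_rfl]) hu'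
            simpa [hau] using this
          · exact Finset.sum_nonneg fun i _ => by split_ifs; exacts [hp0 A, le_rfl]
      _ = ∑ u' ∈ G.erase u, ∑ A ∈ 𝒜, if A u' = A u then p A else 0 := Finset.sum_comm
      _ = ∑ u' ∈ G.erase u, ∑ A ∈ 𝒜.filter (fun A => A u' = A u), p A := by
          simp [Finset.sum_filter]
  have key := hweak (G.erase u) {u}
  simp only [Finset.sum_singleton, Finset.card_singleton, Nat.cast_one] at key
  have hinter : ((G.erase u) ∩ {u} : Finset U) = ∅ := by
    ext x
    simp only [Finset.mem_inter, Finset.mem_singleton, Finset.notMem_empty, iff_false]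
    rintro ⟨hx, rfl⟩
    exact (Finset.notMem_erase x G) hx
  rw [hinter] at key
  have h2 : ((G.erase u).card : ℝ) * 1 * α / (Im𝒜.card : ℝ) ≤
      (G.card : ℝ) * α / (Im𝒜.card : ℝ) := by
    rw [div_eq_mul_inv, div_eq_mul_inv]
    refine mul_le_mul_of_nonneg_right ?_ (by positivity)
    rw [mul_one]
    exact mul_le_mul_of_nonneg_right
      (Nat.cast_le.mpr (Finset.card_erase_le)) hα
  have h3 : ((min (G.erase u).card 1 : ℕ) : ℝ) * β ≤ β := by
    have : ((min (G.erase u).card 1 : ℕ) : ℝ) ≤ 1 := by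
      exact_mod_cast Nat.min_le_right _ 1
    nlinarith
  calc ∑ A ∈ 𝒜.filter (fun A => ∃ u' ∈ G.erase u, A u' = A u), p A
      ≤ ∑ u' ∈ G.erase u, ∑ A ∈ 𝒜.filter (fun A => A u' = A u), p A := h1
    _ ≤ ((∅ : Finset U).card : ℝ) + ((G.erase u).card : ℝ) * 1 * α / (Im𝒜.card : ℝ)
          + ((min (G.erase u).card 1 : ℕ) : ℝ) * β := key
    _ ≤ (G.card : ℝ) * α / (Im𝒜.card : ℝ) + β := by
        simp only [Finset.card_empty, Nat.cast_zero, zero_add]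
        linarith
end

section
/- Let U be a finite set, (A, p_A) an ensemble of functions from U to a finite set satisfying the weak hash inequality with parameters (α, β), G ⊆ U, and μ a probability distribution supported on G. Then the expectation over A drawn from p_A of μ({u : (G \ {u}) ∩ C_A(Au) ≠ ∅}) is at most |G|·α/|ImA| + β. -/
open Finset
open scoped Classical

/-- Averaged collision-resistance: the expected probability (over the ensemble) that a
`μ`-random element of `G` collides with another element of `G` is bounded. -/
theorem stmt3 {U V : Type*} [Fintype U] [DecidableEq U] [Fintype V] [DecidableEq V]
    (𝒜 : Finset (U → V)) (p : (U → V) → ℝ)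
    (hp0 : ∀ A, 0 ≤ p A) (hp1 : ∑ A ∈ 𝒜, p A = 1)
    (α β : ℝ) (hα : 0 ≤ α) (hβ : 0 ≤ β)
    (Im𝒜 : Finset V) (hIm : Im𝒜 = 𝒜.biUnion fun A => Finset.image A Finset.univ)
    (hweak : ∀ T T' : Finset U,
      ∑ u ∈ T, ∑ u' ∈ T', ∑ A ∈ 𝒜.filter (fun A => A u = A u'), p A ≤
        ((T ∩ T').card : ℝ) + (T.card : ℝ) * (T'.card : ℝ) * α / (Im𝒜.card : ℝ)
          + ((min T.card T'.card : ℕ) : ℝ) * β)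
    (G : Finset U) (μ : U → ℝ)
    (hμ0 : ∀ u, 0 ≤ μ u) (hμ1 : ∑ u ∈ G, μ u = 1) (hμG : ∀ u ∉ G, μ u = 0) :
    ∑ A ∈ 𝒜, p A *
        ∑ u ∈ Finset.univ.filter (fun u => ∃ u' ∈ G.erase u, A u' = A u), μ u ≤
      (G.card : ℝ) * α / (Im𝒜.card : ℝ) + β := by
  set B : ℝ := (G.card : ℝ) * α / (Im𝒜.card : ℝ) + β with hB
  have hBnn : 0 ≤ B :=
    add_nonneg (div_nonneg (mul_nonneg (Nat.cast_nonneg _) hα) (Nat.cast_nonneg _)) hβ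
  -- pointwise bound for u ∈ G
  have key : ∀ u ∈ G, ∑ A ∈ 𝒜.filter (fun A => ∃ u' ∈ G.erase u, A u' = A u), p A ≤ B := by
    intro u hu
    have h1 : ∑ A ∈ 𝒜.filter (fun A => ∃ u' ∈ G.erase u, A u' = A u), p A ≤
        ∑ u' ∈ G.erase u, ∑ A ∈ 𝒜.filter (fun A => A u = A u'), p A := by
      rw [Finset.sum_filter]
      have hR : ∑ u' ∈ G.erase u, ∑ A ∈ 𝒜.filter (fun A => A u = A u'), p A
          = ∑ A ∈ 𝒜, ∑ u' ∈ G.erase u, if A u = A u' then p A else 0 := by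
        rw [Finset.sum_comm]
        congr 1
        funext u'
        rw [Finset.sum_filter]
      rw [hR]
      apply Finset.sum_le_sum
      intro A hA
      have hnn : ∀ i, (0:ℝ) ≤ if A u = A i then p A else 0 := fun i => by
        split <;> first | exact hp0 A | exact le_rfl
      by_cases h : ∃ u' ∈ G.erase u, A u' = A u
      · rw [if_pos h]
        obtain ⟨w, hw, hwe⟩ := h
        have hs := Finset.single_le_sum (f := fun u' => if A u = A u' then p A else 0)
          (fun i _ => hnn i) hw
        simpa [hwe.symm] using hs
      · rw [if_neg h]
        exact Finset.sum_nonneg fun i _ => hnn i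
    have h2 := hweak {u} G
    rw [Finset.sum_singleton] at h2
    have hcard1 : ({u} : Finset U).card = 1 := Finset.card_singleton u
    have hint : ({u} : Finset U) ∩ G = {u} := by
      rw [Finset.singleton_inter_of_mem hu]
    have hGpos : 1 ≤ G.card := Finset.card_pos.mpr ⟨u, hu⟩
    rw [hint, hcard1, min_eq_left hGpos] at h2
    have hdiag : ∑ A ∈ 𝒜.filter (fun A => A u = A u), p A = 1 := by
      rw [Finset.filter_true_of_mem (fun A _ => rfl), hp1]
    have hsplit : ∑ u' ∈ G, ∑ A ∈ 𝒜.filter (fun A => A u = A u'), p A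
        = 1 + ∑ u' ∈ G.erase u, ∑ A ∈ 𝒜.filter (fun A => A u = A u'), p A := by
      rw [← Finset.add_sum_erase G _ hu, hdiag]
    rw [hsplit] at h2
    simp only [Finset.card_singleton, Nat.cast_one, one_mul] at h2
    rw [hB]
    linarith [h1]
  -- reshuffle the main sum
  have hmain : ∑ A ∈ 𝒜, p A *
      ∑ u ∈ Finset.univ.filter (fun u => ∃ u' ∈ G.erase u, A u' = A u), μ u
      = ∑ u ∈ Finset.univ, μ u *
          ∑ A ∈ 𝒜.filter (fun A => ∃ u' ∈ G.erase u, A u' = A u), p A := by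
    have : ∀ A, p A * ∑ u ∈ Finset.univ.filter (fun u => ∃ u' ∈ G.erase u, A u' = A u), μ u
        = ∑ u ∈ Finset.univ, (if ∃ u' ∈ G.erase u, A u' = A u then p A * μ u else 0) := by
      intro A
      rw [Finset.sum_filter, Finset.mul_sum]
      congr 1; funext u
      split <;> simp
    simp only [this]
    rw [Finset.sum_comm]
    congr 1; funext u
    rw [Finset.sum_filter, Finset.mul_sum]
    congr 1; funext A
    split <;> ring
  rw [hmain]
  have hrestrict : ∑ u ∈ Finset.univ, μ u *
      ∑ A ∈ 𝒜.filter (fun A => ∃ u' ∈ G.erase u, A u' = A u), p A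
      = ∑ u ∈ G, μ u *
          ∑ A ∈ 𝒜.filter (fun A => ∃ u' ∈ G.erase u, A u' = A u), p A := by
    symm
    apply Finset.sum_subset G.subset_univ
    intro u _ hu
    rw [hμG u hu, zero_mul]
  rw [hrestrict]
  calc ∑ u ∈ G, μ u * ∑ A ∈ 𝒜.filter (fun A => ∃ u' ∈ G.erase u, A u' = A u), p A
      ≤ ∑ u ∈ G, μ u * B := by
        apply Finset.sum_le_sum
        intro u hu
        exact mul_le_mul_of_nonneg_left (key u hu) (hμ0 u)
    _ = B := by rw [← Finset.sum_mul, hμ1, one_mul]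
end

section
/- Let (U, V) = {(Uⁿ, Vⁿ)} be a sequence of pairs of random variables with Uⁿ, Vⁿ taking values in finite sets. Suppose there exist functions ψₙ such that P(ψₙ(Vⁿ) ≠ Uⁿ) → 0 as n → ∞. Then the spectral conditional sup-entropy rate satisfies H̄(U|V) = 0, i.e., for every γ > 0, lim_{n→∞} P( (1/n)·log(1/μ_{Uⁿ|Vⁿ}(Uⁿ|Vⁿ)) > γ ) = 0. -/
open Finset Filter
open scoped Classical

/-- Fano-type lemma: if decoders `ψₙ` achieve vanishing error probability, then the
spectral conditional sup-entropy rate of `U` given `V` is zero, i.e. for every `γ > 0`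
the probability that the normalized conditional self-information exceeds `γ` vanishes. -/
theorem stmt6 (U V : ℕ → Type*) [∀ n, Fintype (U n)] [∀ n, Fintype (V n)]
    (μ : ∀ n, U n × V n → ℝ)
    (hμ0 : ∀ n q, 0 ≤ μ n q) (hμ1 : ∀ n, ∑ q : U n × V n, μ n q = 1)
    (ψ : ∀ n, V n → U n)
    (herr : Tendsto (fun n => ∑ q : U n × V n, if ψ n q.2 ≠ q.1 then μ n q else 0)
      atTop (nhds 0)) :
    ∀ γ : ℝ, 0 < γ →
      Tendsto (fun n => ∑ q : U n × V n,
          if γ < (1 / (n : ℝ)) *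
              Real.logb 2 (1 / (μ n q / (∑ u : U n, μ n (u, q.2)))) then μ n q else 0)
        atTop (nhds 0) := by
  intro γ hγ
  set b : ℝ := (2 : ℝ) ^ (-γ) with hb
  have hb0 : 0 < b := Real.rpow_pos_of_pos two_pos _
  have hb1 : b < 1 := Real.rpow_lt_one_of_one_lt_of_neg one_lt_two (by linarith)
  have hlim : Tendsto (fun n => (∑ q : U n × V n, if ψ n q.2 ≠ q.1 then μ n q else 0)
      + b ^ n) atTop (nhds 0) := by
    simpa using herr.add (tendsto_pow_atTop_nhds_zero_of_lt_one hb0.le hb1)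
  refine tendsto_of_tendsto_of_tendsto_of_le_of_le' tendsto_const_nhds hlim ?_ ?_
  · filter_upwards with n
    refine Finset.sum_nonneg fun q _ => ?_
    split_ifs
    · exact hμ0 n q
    · exact le_rfl
  · filter_upwards [eventually_ge_atTop 1] with n hn
    have hn0 : (0 : ℝ) < n := by exact_mod_cast hn
    -- key pointwise bound in the "correct decoding" case
    have key : ∀ q : U n × V n,
        (γ < (1 / (n : ℝ)) *
            Real.logb 2 (1 / (μ n q / (∑ u : U n, μ n (u, q.2))))) →
        μ n q ≤ b ^ n * (∑ u : U n, μ n (u, q.2)) := by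
      intro q hcond
      set m := μ n q with hm
      set s := ∑ u : U n, μ n (u, q.2) with hs
      have hs0 : 0 ≤ s := Finset.sum_nonneg fun u _ => hμ0 n _
      rcases eq_or_lt_of_le (hμ0 n q) with h0 | h0
      · have hm0 : m = 0 := hm.trans h0.symm
        rw [hm0]
        exact mul_nonneg (pow_nonneg hb0.le n) hs0
      · have hms : m ≤ s := by
          rw [hs]
          have : μ n (q.1, q.2) ≤ ∑ u : U n, μ n (u, q.2) :=
            Finset.single_le_sum (f := fun u => μ n (u, q.2))
              (fun u _ => hμ0 n _) (Finset.mem_univ q.1)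
          simpa [hm] using this
        have hsm0 : 0 < s := lt_of_lt_of_le h0 hms
        have hinv : 1 / (m / s) = s / m := by
          field_simp
        rw [hinv] at hcond
        have hlog : (n : ℝ) * γ < Real.logb 2 (s / m) := by
          have h2 : γ * n < (1 / (n : ℝ) * Real.logb 2 (s / m)) * n :=
            (mul_lt_mul_iff_left₀ hn0).mpr hcond
          have h3 : (1 / (n : ℝ) * Real.logb 2 (s / m)) * n = Real.logb 2 (s / m) := by
            field_simp
          rw [mul_comm, ← h3]
          exact h2
        have hsm : (2 : ℝ) ^ ((n : ℝ) * γ) < s / m := by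
          calc (2 : ℝ) ^ ((n : ℝ) * γ) < (2 : ℝ) ^ (Real.logb 2 (s / m)) :=
                Real.rpow_lt_rpow_left_iff one_lt_two |>.mpr hlog
            _ = s / m := Real.rpow_logb two_pos (by norm_num) (by positivity)
        have hbn : b ^ n = (2 : ℝ) ^ (-((n : ℝ) * γ)) := by
          rw [hb, ← Real.rpow_natCast ((2:ℝ) ^ (-γ)) n, ← Real.rpow_mul (by norm_num)]
          ring_nf
        rw [hbn, Real.rpow_neg (by norm_num)]
        rw [inv_mul_eq_div, le_div_iff₀ (Real.rpow_pos_of_pos two_pos _)]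
        calc m * (2 : ℝ) ^ ((n : ℝ) * γ) ≤ m * (s / m) :=
              mul_le_mul_of_nonneg_left hsm.le h0.le
          _ = s := by have hm0 : m ≠ 0 := ne_of_gt h0; field_simp
    calc (∑ q : U n × V n,
          if γ < (1 / (n : ℝ)) *
              Real.logb 2 (1 / (μ n q / (∑ u : U n, μ n (u, q.2)))) then μ n q else 0)
        ≤ ∑ q : U n × V n, ((if ψ n q.2 ≠ q.1 then μ n q else 0)
            + (if ψ n q.2 = q.1 then b ^ n * (∑ u : U n, μ n (u, q.2)) else 0)) := by
          refine Finset.sum_le_sum fun q _ => ?_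
          have hnn : (0:ℝ) ≤ b ^ n * (∑ u : U n, μ n (u, q.2)) := by
            have : (0:ℝ) ≤ ∑ u : U n, μ n (u, q.2) :=
              Finset.sum_nonneg fun u _ => hμ0 n _
            positivity
          by_cases he : ψ n q.2 = q.1
          · by_cases hc : γ < (1 / (n : ℝ)) *
                Real.logb 2 (1 / (μ n q / (∑ u : U n, μ n (u, q.2))))
            · rw [if_pos hc, if_neg (not_not_intro he), if_pos he, zero_add]
              exact key q hc
            · rw [if_neg hc, if_neg (not_not_intro he), if_pos he, zero_add]
              exact hnn
          · simp only [he, if_true, if_false, Ne, not_false_iff, add_zero]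
            split_ifs
            · exact le_rfl
            · exact hμ0 n q
      _ = (∑ q : U n × V n, if ψ n q.2 ≠ q.1 then μ n q else 0)
            + (∑ q : U n × V n, if ψ n q.2 = q.1 then b ^ n * (∑ u : U n, μ n (u, q.2)) else 0) :=
          Finset.sum_add_distrib
      _ ≤ (∑ q : U n × V n, if ψ n q.2 ≠ q.1 then μ n q else 0) + b ^ n := by
          gcongr ?_ + ?_
          · exact le_rfl
          · have : (∑ q : U n × V n, if ψ n q.2 = q.1 then
                b ^ n * (∑ u : U n, μ n (u, q.2)) else 0)
                = b ^ n * ∑ q : U n × V n, μ n q := by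
              rw [Fintype.sum_prod_type_right]
              rw [Fintype.sum_prod_type_right]
              rw [Finset.mul_sum]
              refine Finset.sum_congr rfl fun v _ => ?_
              simp [Finset.sum_ite_eq]
            rw [this, hμ1, mul_one]
end

section
/- Fix n and finite sets, and let U, V be random variables, ψ a function with P(ψ(V) ≠ U) = δ. Then for every γ > 0, P( (1/n)·log(1/μ_{U|V}(U|V)) ≥ γ ) ≤ δ + 2^{−nγ}. -/
open Finset
open scoped Classical

/-- Single-`n` quantitative Fano-type bound:
`P((1/n)·log(1/μ_{U|V}(U|V)) ≥ γ) ≤ P(ψ(V) ≠ U) + 2^{-nγ}`. -/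
theorem stmt7 {U V : Type*} [Fintype U] [Fintype V]
    (μ : U × V → ℝ) (hμ0 : ∀ q, 0 ≤ μ q) (hμ1 : ∑ q : U × V, μ q = 1)
    (ψ : V → U) (δ : ℝ)
    (hδ : δ = ∑ q : U × V, if ψ q.2 ≠ q.1 then μ q else 0)
    (n : ℕ) (hn : 1 ≤ n) (γ : ℝ) (hγ : 0 < γ) :
    ∑ q : U × V,
        (if γ ≤ (1 / (n : ℝ)) *
            Real.logb 2 (1 / (μ q / (∑ u : U, μ (u, q.2)))) then μ q else 0) ≤
      δ + (2 : ℝ) ^ (-((n : ℝ) * γ)) := by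
  set c : ℝ := (2 : ℝ) ^ (-((n : ℝ) * γ)) with hc
  have hcpos : 0 < c := Real.rpow_pos_of_pos (by norm_num) _
  set S : V → ℝ := fun v => ∑ u : U, μ (u, v) with hSdef
  have hS0 : ∀ v, 0 ≤ S v := fun v => Finset.sum_nonneg fun u _ => hμ0 _
  have hle : ∀ u v, μ (u, v) ≤ S v := fun u v =>
    Finset.single_le_sum (fun u _ => hμ0 (u, v)) (mem_univ u)
  have hnpos : (0 : ℝ) < (n : ℝ) := by exact_mod_cast Nat.lt_of_lt_of_le Nat.zero_lt_one hn
  have key : ∀ q : U × V,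
      (if γ ≤ (1 / (n : ℝ)) * Real.logb 2 (1 / (μ q / S q.2)) then μ q else 0) ≤
        (if ψ q.2 ≠ q.1 then μ q else 0) + (if ψ q.2 = q.1 then c * S q.2 else 0) := by
    intro q
    by_cases hcond : γ ≤ (1 / (n : ℝ)) * Real.logb 2 (1 / (μ q / S q.2))
    · rw [if_pos hcond]
      by_cases hψ : ψ q.2 = q.1
      · rw [if_neg (by simpa using hψ), if_pos hψ, zero_add]
        -- show μ q ≤ c * S q.2
        rcases eq_or_lt_of_le (hS0 q.2) with hSz | hSpos
        · have hq0 : μ q = 0 := le_antisymm (by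
            have := hle q.1 q.2; rw [← hSz] at this; simpa using this) (hμ0 q)
          rw [hq0]; positivity
        · rcases eq_or_lt_of_le (hμ0 q) with hq0 | hqpos
          · rw [← hq0]; positivity
          · have hrpos : 0 < μ q / S q.2 := div_pos hqpos hSpos
            have hL : (n : ℝ) * γ ≤ Real.logb 2 (1 / (μ q / S q.2)) := by
              have := mul_le_mul_of_nonneg_left hcond (le_of_lt hnpos)
              calc (n : ℝ) * γ ≤ (n : ℝ) * ((1 / (n : ℝ)) * Real.logb 2 (1 / (μ q / S q.2))) := this
                _ = Real.logb 2 (1 / (μ q / S q.2)) := by field_simp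
            have hlogb : Real.logb 2 (μ q / S q.2) ≤ -((n : ℝ) * γ) := by
              rw [Real.logb_div one_ne_zero (ne_of_gt hrpos), Real.logb_one] at hL
              linarith
            have hr : μ q / S q.2 ≤ c := by
              have h1 : μ q / S q.2 = (2 : ℝ) ^ (Real.logb 2 (μ q / S q.2)) :=
                (Real.rpow_logb (by norm_num) (by norm_num) hrpos).symm
              rw [h1, hc]
              exact Real.rpow_le_rpow_of_exponent_le one_le_two hlogb
            calc μ q = (μ q / S q.2) * S q.2 := by field_simp
              _ ≤ c * S q.2 := mul_le_mul_of_nonneg_right hr (le_of_lt hSpos)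
      · rw [if_pos (by simpa using hψ), if_neg hψ, add_zero]
    · rw [if_neg hcond]
      have h1 : (0:ℝ) ≤ (if ψ q.2 ≠ q.1 then μ q else 0) := by
        split
        · exact hμ0 q
        · exact le_refl 0
      have h2 : (0:ℝ) ≤ (if ψ q.2 = q.1 then c * S q.2 else 0) := by
        split
        · exact mul_nonneg (le_of_lt hcpos) (hS0 q.2)
        · exact le_refl 0
      linarith
  show (∑ q : U × V,
      (if γ ≤ (1 / (n : ℝ)) * Real.logb 2 (1 / (μ q / S q.2)) then μ q else 0)) ≤ δ + c
  calc ∑ q : U × V,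
        (if γ ≤ (1 / (n : ℝ)) * Real.logb 2 (1 / (μ q / S q.2)) then μ q else 0)
      ≤ ∑ q : U × V, ((if ψ q.2 ≠ q.1 then μ q else 0) + (if ψ q.2 = q.1 then c * S q.2 else 0)) :=
        Finset.sum_le_sum fun q _ => key q
    _ = δ + ∑ q : U × V, (if ψ q.2 = q.1 then c * S q.2 else 0) := by
        rw [Finset.sum_add_distrib, hδ]
    _ = δ + c := by
        congr 1
        rw [Fintype.sum_prod_type_right]
        have : ∀ v : V, (∑ u : U, if ψ v = u then c * S v else 0) = c * S v := by
          intro v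
          simp [Finset.sum_ite_eq]
        rw [Finset.sum_congr rfl fun v _ => this v]
        rw [← Finset.mul_sum]
        have : (∑ v : V, S v) = 1 := by
          rw [hSdef, ← hμ1, Fintype.sum_prod_type_right]
        rw [this, mul_one]
end

section
/- Let U be a finite set, (A, p_A) an ensemble of functions from U satisfying the weak hash inequality with parameters (α, β). Let μ be a probability distribution on U × Y (Y finite), and for each y let g_A(·|y) pick a maximizer of μ_{X|Y}(·|y) over the coset C_A(c) for the decoding rule x_A(c|y) = argmax_{x'∈C_A(c)} μ_{X|Y}(x'|y). Fix ε > 0 and let T̄ = {(x,y) : (1/n)log(1/μ_{X|Y}(x|y)) ≤ H + ε}. Then E_A[ ∑_{x,y} μ(x,y)·1[x_A(Ax|y) ≠ x] ] ≤ 2^{−n(r − H − ε)}·α + β + μ(T̄^c), where r = (1/n)·log|ImA|. -/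
open Finset
open scoped Classical

/-- Expected maximum-likelihood decoding error bound for an ensemble satisfying the weak
hash inequality:
`E_A[P(x_A(AX|Y) ≠ X)] ≤ 2^{-n(r-H-ε)}·α + β + μ(T̄ᶜ)`, where `r = (1/n)log|ImA|` and
`T̄` is the conditionally typical set at level `H + ε`. -/
theorem stmt11 {U Y V : Type*} [Fintype U] [DecidableEq U] [Fintype Y] [Fintype V]
    [DecidableEq V]
    (𝒜 : Finset (U → V)) (p : (U → V) → ℝ)
    (hp0 : ∀ A, 0 ≤ p A) (hp1 : ∑ A ∈ 𝒜, p A = 1)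
    (α β : ℝ) (hα : 0 ≤ α) (hβ : 0 ≤ β)
    (Im𝒜 : Finset V) (hIm : Im𝒜 = 𝒜.biUnion fun A => Finset.image A Finset.univ)
    (hweak : ∀ T T' : Finset U,
      ∑ u ∈ T, ∑ u' ∈ T', ∑ A ∈ 𝒜.filter (fun A => A u = A u'), p A ≤
        ((T ∩ T').card : ℝ) + (T.card : ℝ) * (T'.card : ℝ) * α / (Im𝒜.card : ℝ)
          + ((min T.card T'.card : ℕ) : ℝ) * β)
    (μ : U × Y → ℝ) (hμ0 : ∀ q, 0 ≤ μ q) (hμ1 : ∑ q : U × Y, μ q = 1)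
    (w : U → Y → ℝ) (hw : ∀ x y, w x y = μ (x, y) / (∑ x' : U, μ (x', y)))
    (g : (U → V) → V → Y → U)
    (hg : ∀ A ∈ 𝒜, ∀ (y : Y) (x : U),
      A (g A (A x) y) = A x ∧ w x y ≤ w (g A (A x) y) y)
    (n : ℕ) (hn : 1 ≤ n) (H ε r : ℝ) (hH : 0 ≤ H) (hε : 0 < ε)
    (hr : r = (1 / (n : ℝ)) * Real.logb 2 ((Im𝒜.card : ℝ)))
    (T : Finset (U × Y))
    (hT : T = Finset.univ.filter fun q : U × Y =>
      0 < w q.1 q.2 ∧ (1 / (n : ℝ)) * Real.logb 2 (1 / w q.1 q.2) ≤ H + ε) :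
    ∑ A ∈ 𝒜, p A * ∑ q ∈ Finset.univ.filter (fun q : U × Y => g A (A q.1) q.2 ≠ q.1), μ q ≤
      (2 : ℝ) ^ (-((n : ℝ) * (r - H - ε))) * α + β + ∑ q ∈ Finset.univ \ T, μ q := by

  classical
  have hn0 : (0:ℝ) < (n:ℝ) := by exact_mod_cast hn
  -- U is nonempty
  have hUne : Nonempty U := by
    by_contra h
    rw [not_nonempty_iff] at h
    have h0 : (∑ q : U × Y, μ q) = 0 :=
      Finset.sum_eq_zero fun q _ => (h.false q.1).elim
    rw [hμ1] at h0; norm_num at h0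
  -- 𝒜 is nonempty
  have hAne : 𝒜.Nonempty := by
    by_contra h
    rw [Finset.not_nonempty_iff_eq_empty] at h
    rw [h, Finset.sum_empty] at hp1; norm_num at hp1
  obtain ⟨A₀, hA₀⟩ := hAne
  obtain ⟨x₀⟩ := hUne
  have hImne : (Im𝒜).Nonempty :=
    ⟨A₀ x₀, by
      rw [hIm]
      exact Finset.mem_biUnion.2 ⟨A₀, hA₀,
        Finset.mem_image.2 ⟨x₀, Finset.mem_univ _, rfl⟩⟩⟩
  have hIm0 : (0:ℝ) < (Im𝒜.card : ℝ) := by exact_mod_cast Finset.card_pos.2 hImne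
  have hnr : (2:ℝ) ^ ((n:ℝ) * r) = (Im𝒜.card : ℝ) := by
    rw [hr, show (n:ℝ) * ((1/(n:ℝ)) * Real.logb 2 ((Im𝒜.card : ℝ)))
        = Real.logb 2 ((Im𝒜.card : ℝ)) by field_simp]
    exact Real.rpow_logb two_pos (by norm_num) hIm0
  have hKα : (2:ℝ) ^ (-((n:ℝ)*(r-H-ε)))
      = (2:ℝ)^((n:ℝ)*(H+ε)) / (Im𝒜.card:ℝ) := by
    rw [← hnr, ← Real.rpow_sub two_pos]
    congr 1; ring
  have hEpos : (0:ℝ) < (2:ℝ)^((n:ℝ)*(H+ε)) := Real.rpow_pos_of_pos two_pos _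
  have hwnn : ∀ x y, 0 ≤ w x y := fun x y => by
    rw [hw]; exact div_nonneg (hμ0 _) (Finset.sum_nonneg fun _ _ => hμ0 _)
  -- lower bound on w for typical pairs
  have hwle : ∀ (y : Y) (x' : U), (x', y) ∈ T →
      (2:ℝ)^(-((n:ℝ)*(H+ε))) ≤ w x' y := by
    intro y x' hx'
    rw [hT, Finset.mem_filter] at hx'
    obtain ⟨-, hpos, hle⟩ := hx'
    have h1 : Real.logb 2 (1 / w x' y) ≤ (n:ℝ)*(H+ε) := by
      have h2 : (n:ℝ) * ((1/(n:ℝ)) * Real.logb 2 (1 / w x' y)) ≤ (n:ℝ)*(H+ε) :=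
        mul_le_mul_of_nonneg_left hle hn0.le
      rwa [show (n:ℝ) * ((1/(n:ℝ)) * Real.logb 2 (1 / w x' y))
          = Real.logb 2 (1 / w x' y) by field_simp] at h2
    have h2 : 1 / w x' y ≤ (2:ℝ)^((n:ℝ)*(H+ε)) :=
      (Real.logb_le_iff_le_rpow one_lt_two (by positivity)).1 h1
    rw [Real.rpow_neg (by norm_num : (0:ℝ) ≤ 2)]
    rw [inv_le_iff_one_le_mul₀ hEpos]
    rw [div_le_iff₀ hpos] at h2
    nlinarith
  -- conditional typical sets are small
  have hcard : ∀ y : Y,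
      (((Finset.univ.filter fun x' : U => (x', y) ∈ T)).card : ℝ)
        ≤ (2:ℝ)^((n:ℝ)*(H+ε)) := by
    intro y
    set s := Finset.univ.filter fun x' : U => (x', y) ∈ T with hs
    have h1 : (s.card : ℝ) * (2:ℝ)^(-((n:ℝ)*(H+ε))) ≤ ∑ x' ∈ s, w x' y := by
      calc (s.card : ℝ) * (2:ℝ)^(-((n:ℝ)*(H+ε)))
          = ∑ _x' ∈ s, (2:ℝ)^(-((n:ℝ)*(H+ε))) := by
            rw [Finset.sum_const, nsmul_eq_mul]
        _ ≤ ∑ x' ∈ s, w x' y := Finset.sum_le_sum fun x' hx' =>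
            hwle y x' (by simpa [hs] using hx')
    have h2 : ∑ x' ∈ s, w x' y ≤ ∑ x' : U, w x' y :=
      Finset.sum_le_sum_of_subset_of_nonneg (Finset.subset_univ _)
        (fun x' _ _ => hwnn x' y)
    have h3 : ∑ x' : U, w x' y ≤ 1 := by
      simp only [hw]
      rw [← Finset.sum_div]
      rcases eq_or_ne (∑ x' : U, μ (x', y)) 0 with h | h
      · rw [h]; norm_num
      · rw [div_self h]
    have hinv : (2:ℝ)^(-((n:ℝ)*(H+ε))) = ((2:ℝ)^((n:ℝ)*(H+ε)))⁻¹ :=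
      Real.rpow_neg (by norm_num) _
    rw [hinv] at h1
    have h4 : (s.card : ℝ) * ((2:ℝ)^((n:ℝ)*(H+ε)))⁻¹ ≤ 1 := by linarith
    calc (s.card : ℝ) = (s.card : ℝ) * ((2:ℝ)^((n:ℝ)*(H+ε)))⁻¹
          * (2:ℝ)^((n:ℝ)*(H+ε)) := by field_simp
      _ ≤ 1 * (2:ℝ)^((n:ℝ)*(H+ε)) := mul_le_mul_of_nonneg_right h4 hEpos.le
      _ = (2:ℝ)^((n:ℝ)*(H+ε)) := one_mul _
  -- per-pair error bound inside the typical set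
  have hmain : ∀ x y, (x, y) ∈ T →
      (∑ A ∈ 𝒜.filter (fun A => g A (A x) y ≠ x), p A) ≤
        (2:ℝ)^(-((n:ℝ)*(r-H-ε))) * α + β := by
    intro x y hxy
    set S := (Finset.univ.filter fun x' : U => (x', y) ∈ T).erase x with hS
    have hstep : (∑ A ∈ 𝒜.filter (fun A => g A (A x) y ≠ x), p A) ≤
        ∑ u' ∈ S, ∑ A ∈ 𝒜.filter (fun A => A x = A u'), p A := by
      have hrhs : ∑ u' ∈ S, ∑ A ∈ 𝒜.filter (fun A => A x = A u'), p A
          = ∑ A ∈ 𝒜, ∑ u' ∈ S, if A x = A u' then p A else 0 := by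
        simp_rw [Finset.sum_filter]
        rw [Finset.sum_comm]
      rw [hrhs, Finset.sum_filter]
      apply Finset.sum_le_sum
      intro A hA
      by_cases hgA : g A (A x) y ≠ x
      · rw [if_pos hgA]
        have hgw := hg A hA y x
        have hgT : (g A (A x) y, y) ∈ T := by
          rw [hT, Finset.mem_filter] at hxy ⊢
          obtain ⟨-, hpos, hle⟩ := hxy
          have hpos' : 0 < w (g A (A x) y) y := lt_of_lt_of_le hpos hgw.2
          refine ⟨Finset.mem_univ _, hpos', ?_⟩
          refine le_trans ?_ hle
          apply mul_le_mul_of_nonneg_left _ (by positivity)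
          apply Real.logb_le_logb_of_le one_lt_two (by positivity)
          exact one_div_le_one_div_of_le hpos hgw.2
        have hx' : g A (A x) y ∈ S := by
          rw [hS]
          exact Finset.mem_erase.2 ⟨hgA, Finset.mem_filter.2 ⟨Finset.mem_univ _, hgT⟩⟩
        calc p A = if A x = A (g A (A x) y) then p A else 0 := by
              rw [if_pos hgw.1.symm]
          _ ≤ ∑ u' ∈ S, if A x = A u' then p A else 0 :=
              Finset.single_le_sum
                (f := fun u' => if A x = A u' then p A else 0)
                (fun i _ => by split <;> simp [hp0 A]) hx'
      · rw [if_neg hgA]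
        exact Finset.sum_nonneg fun i _ => by split <;> simp [hp0 A]
    have hw2 := hweak {x} S
    simp only [Finset.sum_singleton, Finset.card_singleton] at hw2
    have hxS : x ∉ S := Finset.notMem_erase _ _
    have hinter : (({x} : Finset U) ∩ S).card = 0 := by
      rw [Finset.card_eq_zero, Finset.singleton_inter_of_notMem hxS]
    have hmin : ((min 1 S.card : ℕ) : ℝ) ≤ 1 := by
      exact_mod_cast Nat.cast_le.2 (min_le_left 1 S.card)
    have hScard : (S.card : ℝ) ≤ (2:ℝ)^((n:ℝ)*(H+ε)) := by
      refine le_trans ?_ (hcard y)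
      exact_mod_cast Finset.card_le_card (Finset.erase_subset _ _)
    have hα2 : (1:ℝ) * (S.card:ℝ) * α / (Im𝒜.card:ℝ)
        ≤ (2:ℝ)^(-((n:ℝ)*(r-H-ε))) * α := by
      rw [hKα, one_mul, div_mul_eq_mul_div]
      gcongr
    have hβ2 : ((min 1 S.card : ℕ) : ℝ) * β ≤ β := by
      nlinarith
    rw [hinter] at hw2
    simp only [Nat.cast_zero, zero_add] at hw2
    linarith
  -- swap the order of summation
  set K := (2:ℝ)^(-((n:ℝ)*(r-H-ε))) * α + β with hK
  have hK0 : 0 ≤ K := by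
    have : (0:ℝ) < (2:ℝ)^(-((n:ℝ)*(r-H-ε))) := Real.rpow_pos_of_pos two_pos _
    nlinarith
  have hswap : ∑ A ∈ 𝒜, p A *
        ∑ q ∈ Finset.univ.filter (fun q : U × Y => g A (A q.1) q.2 ≠ q.1), μ q
      = ∑ q : U × Y, μ q *
          ∑ A ∈ 𝒜.filter (fun A => g A (A q.1) q.2 ≠ q.1), p A := by
    simp_rw [Finset.sum_filter, Finset.mul_sum, mul_ite, mul_zero]
    rw [Finset.sum_comm]
    exact Finset.sum_congr rfl fun q _ => Finset.sum_congr rfl fun A _ => by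
      split <;> ring
  have he1 : ∀ q : U × Y,
      ∑ A ∈ 𝒜.filter (fun A => g A (A q.1) q.2 ≠ q.1), p A ≤ 1 := by
    intro q
    rw [← hp1]
    exact Finset.sum_le_sum_of_subset_of_nonneg (Finset.filter_subset _ _)
      (fun A _ _ => hp0 A)
  have hμT : ∑ q ∈ T, μ q ≤ 1 := by
    rw [← hμ1]
    exact Finset.sum_le_sum_of_subset_of_nonneg (Finset.subset_univ _)
      (fun q _ _ => hμ0 q)
  rw [hswap, ← Finset.sum_sdiff (Finset.subset_univ T)]
  have hb1 : ∑ q ∈ Finset.univ \ T, μ q *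
      (∑ A ∈ 𝒜.filter (fun A => g A (A q.1) q.2 ≠ q.1), p A)
      ≤ ∑ q ∈ Finset.univ \ T, μ q := by
    apply Finset.sum_le_sum
    intro q _
    calc μ q * (∑ A ∈ 𝒜.filter (fun A => g A (A q.1) q.2 ≠ q.1), p A)
        ≤ μ q * 1 := mul_le_mul_of_nonneg_left (he1 q) (hμ0 q)
      _ = μ q := mul_one _
  have hb2 : ∑ q ∈ T, μ q *
      (∑ A ∈ 𝒜.filter (fun A => g A (A q.1) q.2 ≠ q.1), p A)
      ≤ K := by
    calc ∑ q ∈ T, μ q * (∑ A ∈ 𝒜.filter (fun A => g A (A q.1) q.2 ≠ q.1), p A)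
        ≤ ∑ q ∈ T, μ q * K := by
          apply Finset.sum_le_sum
          intro q hq
          exact mul_le_mul_of_nonneg_left (hmain q.1 q.2 (by simpa using hq)) (hμ0 q)
      _ = (∑ q ∈ T, μ q) * K := by rw [Finset.sum_mul]
      _ ≤ 1 * K := mul_le_mul_of_nonneg_right hμT hK0
      _ = K := one_mul _
  linarith
end
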